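/- Let p : (0,1) → [1,∞) be nondecreasing with p(1) < ∞ and assume ∫_a^1 (a^{1/p'(a)} x^{-1/p'(x)})^{p(x)} dx/x ≤ C for all a ∈ (0,1). Then p(0⁺) := lim_{x→0⁺} p(x) > 1. -/

import Mathlib

open MeasureTheory Set Real

lemma key_lemma (p : ℝ → ℝ) (C : ℝ)
    (hmono : MonotoneOn p (Set.Ioc 0 1))
    (hp1 : ∀ x ∈ Set.Ioc (0:ℝ) 1, 1 ≤ p x)
    (hC : 0 < C)
    (hint : ∀ a ∈ Set.Ioo (0:ℝ) 1,
      ∫ x in Set.Ioc a 1,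
        (a ^ (1 - 1 / p a) * x ^ (-(1 - 1 / p x))) ^ p x / x ≤ C)
    (a : ℝ) (ha0 : 0 < a) (ha1 : a < 1)
    (hLa : Real.exp 1 * C < -Real.log a) :
    1 / (Real.exp 1 * C * p 1) ≤ 1 - 1 / p a := by
  have h1mem : (1:ℝ) ∈ Set.Ioc (0:ℝ) 1 := ⟨zero_lt_one, le_rfl⟩
  have hamem : a ∈ Set.Ioc (0:ℝ) 1 := ⟨ha0, ha1.le⟩
  set P := p 1 with hP
  have hP1 : 1 ≤ P := hp1 1 h1mem
  have hP0 : 0 < P := lt_of_lt_of_le zero_lt_one hP1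
  set L := -Real.log a with hLdef
  have hL0 : 0 < L := by
    have := Real.log_neg ha0 ha1
    simp only [hLdef]; linarith
  have heC : 0 < Real.exp 1 * C := mul_pos (Real.exp_pos 1) hC
  set η := Real.exp 1 * C / L with hηdef
  have hη0 : 0 < η := div_pos heC hL0
  have hη1 : η < 1 := (div_lt_one hL0).mpr hLa
  have hηL : η * L = Real.exp 1 * C := div_mul_cancel₀ _ hL0.ne'
  set b := a ^ (1 - η) with hbdef
  have hb1 : b < 1 := Real.rpow_lt_one ha0.le ha1 (by linarith)
  have hab : a < b := by
    calc a = a ^ (1:ℝ) := (Real.rpow_one a).symm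
    _ < a ^ (1 - η) := Real.rpow_lt_rpow_of_exponent_gt ha0 ha1 (by linarith)
  have hb0 : 0 < b := lt_trans ha0 hab
  have hlogb : Real.log b = (1 - η) * Real.log a := Real.log_rpow ha0 _
  -- epsilon
  have hεbound : ∀ x ∈ Set.Ioc (0:ℝ) 1, 0 ≤ 1 - 1 / p x ∧ 1 - 1 / p x < 1 := by
    intro x hx
    have hpx : 1 ≤ p x := hp1 x hx
    have hpx0 : 0 < p x := lt_of_lt_of_le zero_lt_one hpx
    constructor
    · have : 1 / p x ≤ 1 := by
        rw [div_le_one hpx0]; exact hpx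
      linarith
    · have : 0 < 1 / p x := by positivity
      linarith
  have hεa0 : 0 ≤ 1 - 1 / p a := (hεbound a hamem).1
  -- the integrand
  set f : ℝ → ℝ := fun x => (a ^ (1 - 1 / p a) * x ^ (-(1 - 1 / p x))) ^ p x / x with hfdef
  -- measurability
  have hpm : AEMeasurable p (volume.restrict (Set.Ioc a 1)) :=
    aemeasurable_restrict_of_monotoneOn measurableSet_Ioc
      (hmono.mono (Set.Ioc_subset_Ioc_left ha0.le))
  have hfmeas : AEStronglyMeasurable f (volume.restrict (Set.Ioc a 1)) := by
    set g : ℝ → ℝ := fun x =>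
      Real.exp (p x * ((1 - 1 / p a) * Real.log a + (-(1 - 1 / p x)) * Real.log x)) / x with hgdef
    have hgm : AEMeasurable g (volume.restrict (Set.Ioc a 1)) := by
      apply AEMeasurable.div _ aemeasurable_id
      apply (Real.measurable_exp.comp_aemeasurable)
      apply hpm.mul
      apply AEMeasurable.add
      · exact aemeasurable_const
      · exact (aemeasurable_const.sub (aemeasurable_const.div hpm)).neg.mul
          Real.measurable_log.aemeasurable
    have hfg : f =ᵐ[volume.restrict (Set.Ioc a 1)] g := by
      filter_upwards [ae_restrict_mem measurableSet_Ioc] with x hx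
      have hx0 : 0 < x := lt_trans ha0 hx.1
      have hB : a ^ (1 - 1 / p a) * x ^ (-(1 - 1 / p x))
          = Real.exp ((1 - 1 / p a) * Real.log a + (-(1 - 1 / p x)) * Real.log x) := by
        rw [Real.rpow_def_of_pos ha0, Real.rpow_def_of_pos hx0, ← Real.exp_add]
        ring_nf
      simp only [hfdef, hgdef, hB]
      rw [← Real.exp_mul, mul_comm]
    exact (hgm.congr hfg.symm).aestronglyMeasurable
  -- boundedness and integrability
  have hfnonneg : ∀ x ∈ Set.Ioc a 1, 0 ≤ f x := by
    intro x hx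
    have hx0 : 0 < x := lt_trans ha0 hx.1
    have : 0 ≤ (a ^ (1 - 1 / p a) * x ^ (-(1 - 1 / p x))) ^ p x :=
      Real.rpow_nonneg (mul_nonneg (Real.rpow_nonneg ha0.le _) (Real.rpow_nonneg hx0.le _)) _
    exact div_nonneg this hx0.le
  have hfbdd : ∀ x ∈ Set.Ioc a 1, f x ≤ (a⁻¹) ^ P / a := by
    intro x hx
    have hx0 : 0 < x := lt_trans ha0 hx.1
    have hxmem : x ∈ Set.Ioc (0:ℝ) 1 := ⟨hx0, hx.2⟩
    have hεx := hεbound x hxmem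
    have hpx1 : 1 ≤ p x := hp1 x hxmem
    have hpxP : p x ≤ P := hmono hxmem h1mem hx.2
    have hB1 : a ^ (1 - 1 / p a) ≤ 1 := Real.rpow_le_one ha0.le ha1.le hεa0
    have hB2 : x ^ (-(1 - 1 / p x)) ≤ x⁻¹ := by
      have h1 : x ^ (-(1 - 1 / p x)) ≤ x ^ (-1 : ℝ) :=
        Real.rpow_le_rpow_of_exponent_ge hx0 hx.2 (by linarith [hεx.2])
      rwa [Real.rpow_neg_one] at h1
    have hBle : a ^ (1 - 1 / p a) * x ^ (-(1 - 1 / p x)) ≤ a⁻¹ := by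
      have hxa : x⁻¹ ≤ a⁻¹ := inv_anti₀ ha0 hx.1.le
      calc a ^ (1 - 1 / p a) * x ^ (-(1 - 1 / p x))
          ≤ 1 * x⁻¹ := by
            apply mul_le_mul hB1 hB2 (Real.rpow_nonneg hx0.le _) zero_le_one
      _ = x⁻¹ := one_mul _
      _ ≤ a⁻¹ := hxa
    have hBnn : 0 ≤ a ^ (1 - 1 / p a) * x ^ (-(1 - 1 / p x)) :=
      mul_nonneg (Real.rpow_nonneg ha0.le _) (Real.rpow_nonneg hx0.le _)
    have hN : (a ^ (1 - 1 / p a) * x ^ (-(1 - 1 / p x))) ^ p x ≤ (a⁻¹) ^ P := by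
      calc (a ^ (1 - 1 / p a) * x ^ (-(1 - 1 / p x))) ^ p x
          ≤ (a⁻¹) ^ p x := Real.rpow_le_rpow hBnn hBle (by linarith)
      _ ≤ (a⁻¹) ^ P := Real.rpow_le_rpow_of_exponent_le ((one_le_inv₀ ha0).mpr ha1.le) hpxP
    calc f x = (a ^ (1 - 1 / p a) * x ^ (-(1 - 1 / p x))) ^ p x / x := rfl
    _ ≤ (a⁻¹) ^ P / x := (div_le_div_iff_of_pos_right hx0).mpr hN
    _ ≤ (a⁻¹) ^ P / a := by
        apply div_le_div_of_nonneg_left (Real.rpow_nonneg (by positivity) _) ha0 hx.1.le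
  have hvol : volume (Set.Ioc a (1:ℝ)) < ⊤ := measure_Ioc_lt_top
  have hfint : IntegrableOn f (Set.Ioc a 1) := by
    refine ⟨hfmeas, HasFiniteIntegral.restrict_of_bounded (C := (a⁻¹) ^ P / a) hvol ?_⟩
    filter_upwards [ae_restrict_mem measurableSet_Ioc] with x hx
    rw [Real.norm_eq_abs, abs_of_nonneg (hfnonneg x hx)]
    exact hfbdd x hx
  -- the pointwise lower bound on Ioc a b
  set k := a ^ (η * (1 - 1 / p a) * P) with hkdef
  have hptwise : ∀ x ∈ Set.Ioc a b, k * x⁻¹ ≤ f x := by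
    intro x hx
    have hx0 : 0 < x := lt_trans ha0 hx.1
    have hx1 : x ≤ 1 := hx.2.trans hb1.le
    have hxmem : x ∈ Set.Ioc (0:ℝ) 1 := ⟨hx0, hx1⟩
    have hpx1 : 1 ≤ p x := hp1 x hxmem
    have hpx0 : 0 < p x := lt_of_lt_of_le zero_lt_one hpx1
    have hpxP : p x ≤ P := hmono hxmem h1mem hx1
    have hpa0 : 0 < p a := lt_of_lt_of_le zero_lt_one (hp1 a hamem)
    have hεax : 1 - 1 / p a ≤ 1 - 1 / p x := by
      have hpax : p a ≤ p x := hmono hamem hxmem hx.1.le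
      have : 1 / p x ≤ 1 / p a := one_div_le_one_div_of_le hpa0 hpax
      linarith
    -- B ≥ a ^ (η * (1 - 1/p a))
    have hB1 : x ^ (-(1 - 1 / p a)) ≤ x ^ (-(1 - 1 / p x)) :=
      Real.rpow_le_rpow_of_exponent_ge hx0 hx1 (by linarith)
    have hB2 : b ^ (-(1 - 1 / p a)) ≤ x ^ (-(1 - 1 / p a)) := by
      rw [Real.rpow_neg hb0.le, Real.rpow_neg hx0.le]
      exact inv_anti₀ (Real.rpow_pos_of_pos hx0 _)
        (Real.rpow_le_rpow hx0.le hx.2 hεa0)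
    have hBeq : a ^ (1 - 1 / p a) * b ^ (-(1 - 1 / p a)) = a ^ (η * (1 - 1 / p a)) := by
      rw [hbdef, ← Real.rpow_mul ha0.le, ← Real.rpow_add ha0]
      ring_nf
    have hBge : a ^ (η * (1 - 1 / p a)) ≤ a ^ (1 - 1 / p a) * x ^ (-(1 - 1 / p x)) := by
      rw [← hBeq]
      exact mul_le_mul_of_nonneg_left (hB2.trans hB1) (Real.rpow_nonneg ha0.le _)
    have hβ0 : 0 < a ^ (η * (1 - 1 / p a)) := Real.rpow_pos_of_pos ha0 _
    have hβ1 : a ^ (η * (1 - 1 / p a)) ≤ 1 :=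
      Real.rpow_le_one ha0.le ha1.le (mul_nonneg hη0.le hεa0)
    have hk1 : k ≤ (a ^ (η * (1 - 1 / p a))) ^ p x := by
      calc k = (a ^ (η * (1 - 1 / p a))) ^ P := by
              rw [hkdef, ← Real.rpow_mul ha0.le]
      _ ≤ (a ^ (η * (1 - 1 / p a))) ^ p x :=
              Real.rpow_le_rpow_of_exponent_ge hβ0 hβ1 hpxP
    have hk2 : (a ^ (η * (1 - 1 / p a))) ^ p x
        ≤ (a ^ (1 - 1 / p a) * x ^ (-(1 - 1 / p x))) ^ p x :=
      Real.rpow_le_rpow hβ0.le hBge (by linarith)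
    have hkB : k ≤ (a ^ (1 - 1 / p a) * x ^ (-(1 - 1 / p x))) ^ p x := hk1.trans hk2
    calc k * x⁻¹ = k / x := (div_eq_mul_inv _ _).symm
    _ ≤ (a ^ (1 - 1 / p a) * x ^ (-(1 - 1 / p x))) ^ p x / x :=
        (div_le_div_iff_of_pos_right hx0).mpr hkB
    _ = f x := rfl
  -- integrability of the lower function
  have hkpos : 0 < k := Real.rpow_pos_of_pos ha0 _
  have hglow : IntegrableOn (fun x => k * x⁻¹) (Set.Ioc a b) := by
    have hinv : IntervalIntegrable (fun x => x⁻¹) volume a b := by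
      refine intervalIntegral.intervalIntegrable_inv (f := fun x => x) ?_ continuousOn_id
      intro x hx
      rw [Set.uIcc_of_le hab.le] at hx
      exact (lt_of_lt_of_le ha0 hx.1).ne'
    have := (hinv.const_mul k)
    rwa [intervalIntegrable_iff_integrableOn_Ioc_of_le hab.le] at this
  -- chain of integral inequalities
  have hstep1 : ∫ x in Set.Ioc a b, k * x⁻¹ ≤ ∫ x in Set.Ioc a b, f x :=
    setIntegral_mono_on hglow (hfint.mono_set (Set.Ioc_subset_Ioc_right hb1.le))
      measurableSet_Ioc hptwise
  have hstep2 : ∫ x in Set.Ioc a b, f x ≤ ∫ x in Set.Ioc a 1, f x := by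
    apply setIntegral_mono_set hfint
    · filter_upwards [ae_restrict_mem measurableSet_Ioc] with x hx using hfnonneg x hx
    · exact HasSubset.Subset.eventuallyLE (Set.Ioc_subset_Ioc_right hb1.le)
  have hstep3 : ∫ x in Set.Ioc a 1, f x ≤ C := hint a ⟨ha0, ha1⟩
  -- compute the lower integral
  have hcomp : ∫ x in Set.Ioc a b, k * x⁻¹ = k * (Real.exp 1 * C) := by
    rw [MeasureTheory.integral_const_mul]
    have h1 : ∫ x in Set.Ioc a b, x⁻¹ = ∫ x in a..b, x⁻¹ :=
      (intervalIntegral.integral_of_le hab.le).symm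
    rw [h1, integral_inv_of_pos ha0 hb0, Real.log_div hb0.ne' ha0.ne', hlogb]
    have : (1 - η) * Real.log a - Real.log a = η * L := by
      simp only [hLdef]; ring
    rw [this, hηL]
  -- conclude
  have hkey : k * (Real.exp 1 * C) ≤ C := by
    rw [← hcomp] at *
    linarith
  have hkle : k ≤ Real.exp (-1) := by
    have h2 : k ≤ C / (Real.exp 1 * C) := (le_div_iff₀ heC).mpr hkey
    have h3 : C / (Real.exp 1 * C) = Real.exp (-1) := by
      rw [Real.exp_neg]
      field_simp
    rw [h3] at h2
    exact h2
  have hfinal : 1 ≤ (1 - 1 / p a) * (Real.exp 1 * C * P) := by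
    have hk' : Real.exp (Real.log a * (η * (1 - 1 / p a) * P)) ≤ Real.exp (-1) := by
      rwa [← Real.rpow_def_of_pos ha0]
    have h4 : Real.log a * (η * (1 - 1 / p a) * P) ≤ -1 := Real.exp_le_exp.mp hk'
    have h5 : Real.log a = -L := by simp [hLdef]
    rw [h5] at h4
    have h6 : 1 ≤ L * (η * (1 - 1 / p a) * P) := by nlinarith
    calc (1:ℝ) ≤ L * (η * (1 - 1 / p a) * P) := h6
    _ = (1 - 1 / p a) * ((η * L) * P) := by ring
    _ = (1 - 1 / p a) * (Real.exp 1 * C * P) := by rw [hηL]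
  have hpos : 0 < Real.exp 1 * C * P := mul_pos heC hP0
  rw [div_le_iff₀ hpos]
  linarith

/-- Remark after Lemma 3.8: the modular integral condition forces
`p(0⁺) = inf p > 1`. -/
theorem stmt_10 (p : ℝ → ℝ) (C : ℝ)
    (hmono : MonotoneOn p (Set.Ioc 0 1))
    (hp1 : ∀ x ∈ Set.Ioc (0:ℝ) 1, 1 ≤ p x)
    (hC : 0 < C)
    (hint : ∀ a ∈ Set.Ioo (0:ℝ) 1,
      ∫ x in Set.Ioc a 1,
        (a ^ (1 - 1 / p a) * x ^ (-(1 - 1 / p x))) ^ p x / x ≤ C) :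
    1 < sInf (p '' Set.Ioo 0 1) := by
  have h1mem : (1:ℝ) ∈ Set.Ioc (0:ℝ) 1 := ⟨zero_lt_one, le_rfl⟩
  set P := p 1 with hP
  have hP1 : 1 ≤ P := hp1 1 h1mem
  have hP0 : 0 < P := lt_of_lt_of_le zero_lt_one hP1
  have heC : 0 < Real.exp 1 * C := mul_pos (Real.exp_pos 1) hC
  set m := 1 / (Real.exp 1 * C * P) with hm
  have hm0 : 0 < m := by positivity
  set a₀ := Real.exp (-(Real.exp 1 * C + 1)) with ha₀
  have ha₀0 : 0 < a₀ := Real.exp_pos _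
  have ha₀1 : a₀ < 1 := by
    rw [ha₀, Real.exp_lt_one_iff]
    linarith
  have hloga₀ : -Real.log a₀ = Real.exp 1 * C + 1 := by
    rw [ha₀, Real.log_exp]; ring
  -- the uniform lower bound on (0,1)
  have hkeyall : ∀ x ∈ Set.Ioo (0:ℝ) 1, m ≤ 1 - 1 / p x := by
    intro x hx
    rcases le_or_gt x a₀ with hxa | hxa
    · apply key_lemma p C hmono hp1 hC hint x hx.1 hx.2
      have : Real.log x ≤ Real.log a₀ := Real.log_le_log hx.1 hxa
      linarith
    · have hma₀ : m ≤ 1 - 1 / p a₀ := by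
        apply key_lemma p C hmono hp1 hC hint a₀ ha₀0 ha₀1
        rw [hloga₀]; linarith
      have ha₀mem : a₀ ∈ Set.Ioc (0:ℝ) 1 := ⟨ha₀0, ha₀1.le⟩
      have hxmem : x ∈ Set.Ioc (0:ℝ) 1 := ⟨hx.1, hx.2.le⟩
      have hpa₀0 : 0 < p a₀ := lt_of_lt_of_le zero_lt_one (hp1 a₀ ha₀mem)
      have hpax : p a₀ ≤ p x := hmono ha₀mem hxmem hxa.le
      have : 1 / p x ≤ 1 / p a₀ := one_div_le_one_div_of_le hpa₀0 hpax
      linarith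
  -- m < 1 and every value of p is at least 1/(1-m)
  have hhalf : (1/2 : ℝ) ∈ Set.Ioo (0:ℝ) 1 := by norm_num
  have hm1 : m < 1 := by
    have h := hkeyall (1/2) hhalf
    have hp2 : 0 < p (1/2) := lt_of_lt_of_le zero_lt_one (hp1 (1/2) ⟨by norm_num, by norm_num⟩)
    have : 0 < 1 / p (1/2) := by positivity
    linarith
  have hlb : ∀ y ∈ p '' Set.Ioo 0 1, 1 / (1 - m) ≤ y := by
    rintro y ⟨x, hx, rfl⟩
    have h := hkeyall x hx
    have hpx0 : 0 < p x := lt_of_lt_of_le zero_lt_one (hp1 x ⟨hx.1, hx.2.le⟩)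
    have h1m : 0 < 1 - m := by linarith
    rw [div_le_iff₀ h1m]
    have h2 : 1 / p x ≤ 1 - m := by linarith
    rw [div_le_iff₀ hpx0] at h2
    linarith [mul_comm (p x) (1 - m)]
  have hne : (p '' Set.Ioo 0 1).Nonempty := ⟨p (1/2), Set.mem_image_of_mem p hhalf⟩
  have : 1 / (1 - m) ≤ sInf (p '' Set.Ioo 0 1) := le_csInf hne hlb
  have hgt : 1 < 1 / (1 - m) := by
    rw [lt_div_iff₀ (by linarith : (0:ℝ) < 1 - m)]
    linarith
  linarith
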